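/- Define P_n(x) = Π_{j=1}^{n} (x − v_j²) with v_k = 2·cos(2kπ/(2n+1)). Then P_n(x) = Σ_{ν=0}^{n} (−1)^ν·C(2n−ν, ν)·x^{n−ν}. -/

import Mathlib

open Polynomial Real Finset

lemma SSrec (m : ℕ) (x : ℝ) :
    ∑ ν ∈ range (m+3), (-1:ℝ)^ν * ((m+2-ν).choose ν : ℝ) * x ^ (m+2-2*ν)
  = x * ∑ ν ∈ range (m+2), (-1:ℝ)^ν * ((m+1-ν).choose ν : ℝ) * x ^ (m+1-2*ν)
    - ∑ ν ∈ range (m+1), (-1:ℝ)^ν * ((m-ν).choose ν : ℝ) * x ^ (m-2*ν) := by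
  have hL : ∑ ν ∈ range (m+3), (-1:ℝ)^ν * ((m+2-ν).choose ν : ℝ) * x ^ (m+2-2*ν)
      = (∑ ν ∈ range (m+2), (-1:ℝ)^(ν+1) * ((m+1-ν).choose (ν+1) : ℝ) * x ^ (m-2*ν))
        + x^(m+2) := by
    rw [Finset.sum_range_succ' _ (m+2)]
    congr 1
    · apply Finset.sum_congr rfl
      intro ν _
      rw [show m+2-(ν+1) = m+1-ν by omega, show m+2-2*(ν+1) = m-2*ν by omega]
    · simp
  have hPascal : ∀ ν, ((m+1-ν).choose (ν+1) : ℝ) = ((m-ν).choose ν : ℝ) + ((m-ν).choose (ν+1) : ℝ) := by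
    intro ν
    rcases le_or_gt ν m with h | h
    · rw [show m+1-ν = (m-ν)+1 by omega, Nat.choose_succ_succ]
      push_cast; ring
    · rw [show m+1-ν = 0 by omega, show m-ν = 0 by omega,
        Nat.choose_eq_zero_of_lt (show 0 < ν+1 by omega),
        Nat.choose_eq_zero_of_lt (show 0 < ν by omega)]
      norm_num
  have hsplit : ∑ ν ∈ range (m+2), (-1:ℝ)^(ν+1) * ((m+1-ν).choose (ν+1) : ℝ) * x ^ (m-2*ν)
      = (∑ ν ∈ range (m+2), (-1:ℝ)^(ν+1) * ((m-ν).choose ν : ℝ) * x ^ (m-2*ν))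
      + (∑ ν ∈ range (m+2), (-1:ℝ)^(ν+1) * ((m-ν).choose (ν+1) : ℝ) * x ^ (m-2*ν)) := by
    rw [← Finset.sum_add_distrib]
    apply Finset.sum_congr rfl
    intro ν _
    rw [hPascal ν]; ring
  have h1 : ∑ ν ∈ range (m+2), (-1:ℝ)^(ν+1) * ((m-ν).choose ν : ℝ) * x ^ (m-2*ν)
      = - ∑ ν ∈ range (m+1), (-1:ℝ)^ν * ((m-ν).choose ν : ℝ) * x ^ (m-2*ν) := by
    rw [Finset.sum_range_succ, show m-(m+1) = 0 by omega,
      Nat.choose_eq_zero_of_lt (Nat.succ_pos m), ← Finset.sum_neg_distrib]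
    push_cast
    rw [mul_zero, zero_mul, add_zero]
    apply Finset.sum_congr rfl
    intro ν _; ring
  have h2 : ∑ ν ∈ range (m+2), (-1:ℝ)^(ν+1) * ((m-ν).choose (ν+1) : ℝ) * x ^ (m-2*ν)
      = ∑ ν ∈ range (m+1), (-1:ℝ)^(ν+1) * ((m-ν).choose (ν+1) : ℝ) * x ^ (m-2*ν) := by
    rw [Finset.sum_range_succ, show m-(m+1) = 0 by omega,
      Nat.choose_eq_zero_of_lt (by omega : 0 < m+2)]
    norm_num
  have hR : x * ∑ ν ∈ range (m+2), (-1:ℝ)^ν * ((m+1-ν).choose ν : ℝ) * x ^ (m+1-2*ν)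
      = (∑ ν ∈ range (m+1), (-1:ℝ)^(ν+1) * ((m-ν).choose (ν+1) : ℝ) * x ^ (m-2*ν))
        + x^(m+2) := by
    rw [Finset.mul_sum, Finset.sum_range_succ' _ (m+1)]
    congr 1
    · apply Finset.sum_congr rfl
      intro ν _
      rw [show m+1-(ν+1) = m-ν by omega]
      by_cases h : 2*ν+1 ≤ m
      · rw [show m+1-2*(ν+1) = m-2*ν-1 by omega]
        rw [show x * ((-1:ℝ)^(ν+1) * ((m-ν).choose (ν+1) : ℝ) * x ^ (m-2*ν-1))
          = (-1:ℝ)^(ν+1) * ((m-ν).choose (ν+1) : ℝ) * (x ^ (m-2*ν-1) * x) by ring,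
          ← pow_succ, show m-2*ν-1+1 = m-2*ν by omega]
      · rw [Nat.choose_eq_zero_of_lt (by omega : m-ν < ν+1)]
        norm_num
    · simp [pow_succ]; ring
  rw [hL, hsplit, h1, h2, hR]
  ring

lemma trigsum : ∀ (m : ℕ) (θ : ℝ),
    Real.sin (((m:ℝ)+1) * θ)
      = Real.sin θ * ∑ ν ∈ range (m+1),
          (-1:ℝ)^ν * ((m-ν).choose ν : ℝ) * (2*Real.cos θ) ^ (m-2*ν) := by
  intro m
  induction m using Nat.strong_induction_on with
  | _ m ih =>
    match m with
    | 0 => intro θ; simp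
    | 1 =>
      intro θ
      rw [show ((1:ℕ):ℝ)+1 = 2 by norm_num, Real.sin_two_mul]
      simp [Finset.sum_range_succ]
      ring
    | (k+2) =>
      intro θ
      have h1 := ih (k+1) (by omega) θ
      have h0 := ih k (by omega) θ
      rw [SSrec]
      have hsin : Real.sin (((k:ℝ)+2+1) * θ)
          = 2*Real.cos θ * Real.sin (((k:ℝ)+1+1) * θ) - Real.sin (((k:ℝ)+1) * θ) := by
        have e1 : ((k:ℝ)+2+1) * θ = ((k:ℝ)+1+1) * θ + θ := by ring
        have e2 : ((k:ℝ)+1) * θ = ((k:ℝ)+1+1) * θ - θ := by ring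
        rw [e1, e2, Real.sin_add, Real.sin_sub]
        ring
      push_cast
      push_cast at h1 h0 hsin
      rw [hsin, h1, h0]
      ring

lemma qeval (n : ℕ) (hn : 0 < n) (v : ℕ → ℝ)
    (hv : ∀ k, v k = 2 * Real.cos (2 * k * π / (2 * n + 1)))
    (j : ℕ) (h1 : 1 ≤ j) (h2 : j ≤ n) :
    (∑ ν ∈ Finset.range (n + 1),
        C ((-1 : ℝ) ^ ν * ((2 * n - ν).choose ν : ℝ)) * X ^ (n - ν)).eval (v j ^ 2) = 0 := by
  set θ : ℝ := 2 * j * π / (2 * n + 1) with hθ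
  have hvj : v j = 2 * Real.cos θ := hv j
  have hNpos : (0:ℝ) < 2*(n:ℝ)+1 := by positivity
  have hsin_ne : Real.sin θ ≠ 0 := by
    apply ne_of_gt
    apply Real.sin_pos_of_pos_of_lt_pi
    · apply div_pos _ hNpos
      have : (0:ℝ) < (j:ℝ) := by exact_mod_cast h1
      positivity
    · rw [hθ, div_lt_iff₀ hNpos]
      have hj : (j:ℝ) ≤ (n:ℝ) := by exact_mod_cast h2
      nlinarith [Real.pi_pos]
  have hzero : Real.sin ((2*(n:ℝ)+1) * θ) = 0 := by
    have : (2*(n:ℝ)+1) * θ = (2*j : ℕ) * π := by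
      rw [hθ]; push_cast; field_simp
    rw [this, Real.sin_nat_mul_pi]
  have htrig := trigsum (2*n) θ
  -- shrink the sum in htrig from range (2n+1) to range (n+1)
  have hsub : ∑ ν ∈ range (2*n+1), (-1:ℝ)^ν * ((2*n-ν).choose ν : ℝ) * (2*Real.cos θ) ^ (2*n-2*ν)
      = ∑ ν ∈ range (n+1), (-1:ℝ)^ν * ((2*n-ν).choose ν : ℝ) * (2*Real.cos θ) ^ (2*n-2*ν) := by
    apply (Finset.sum_subset (by intro x hx; simp at hx ⊢; omega) _).symm
    intro ν _ hν
    simp only [Finset.mem_range, not_lt] at hν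
    rw [Nat.choose_eq_zero_of_lt (by omega)]
    norm_num
  rw [hsub] at htrig
  have hcast : ((2*n : ℕ):ℝ) + 1 = 2*(n:ℝ)+1 := by push_cast; ring
  rw [hcast, hzero] at htrig
  -- compute the evaluation
  simp only [eval_finset_sum, eval_mul, eval_C, eval_pow, eval_X]
  have hevalsum : ∑ ν ∈ Finset.range (n+1), (-1:ℝ)^ν * ((2*n-ν).choose ν : ℝ) * (v j ^ 2) ^ (n-ν)
      = ∑ ν ∈ range (n+1), (-1:ℝ)^ν * ((2*n-ν).choose ν : ℝ) * (2*Real.cos θ) ^ (2*n-2*ν) := by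
    apply Finset.sum_congr rfl
    intro ν hν
    simp only [Finset.mem_range] at hν
    rw [hvj, ← pow_mul, show 2*(n-ν) = 2*n-2*ν by omega]
  rw [hevalsum]
  have := mul_eq_zero.mp htrig.symm
  tauto

lemma vinj (n : ℕ) (hn : 0 < n) (v : ℕ → ℝ)
    (hv : ∀ k, v k = 2 * Real.cos (2 * k * π / (2 * n + 1))) :
    Function.Injective (fun i : Fin n => v (i.1+1) ^ 2) := by
  intro i j hij
  simp only at hij
  have hNpos : (0:ℝ) < 2*(n:ℝ)+1 := by positivity
  set A : ℝ := 2 * ((i:ℕ)+1 : ℕ) * π / (2 * n + 1) with hA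
  set B : ℝ := 2 * ((j:ℕ)+1 : ℕ) * π / (2 * n + 1) with hB
  rw [hv, hv] at hij
  have hcos2 : Real.cos (2*B) = Real.cos (2*A) := by
    have h1 : Real.cos A ^ 2 = Real.cos B ^ 2 := by nlinarith [hij]
    rw [Real.cos_sq A, Real.cos_sq B] at h1
    linarith
  rw [Real.cos_eq_cos_iff] at hcos2
  obtain ⟨k, hk | hk⟩ := hcos2
  · -- 2A = 2kπ + 2B : then 2(i+1) - 2(j+1) = k(2n+1)
    have hpi := Real.pi_ne_zero
    have hkey : (4*((i:ℕ)+1) : ℝ) = 2*k*(2*n+1) + 4*((j:ℕ)+1) := by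
      have h2 : (4*((i:ℕ)+1) : ℝ) * π = (2*k*(2*n+1) + 4*((j:ℕ)+1)) * π := by
        rw [hA, hB] at hk
        field_simp at hk
        push_cast at hk ⊢
        linear_combination (2*π) * hk
      exact mul_right_cancel₀ hpi h2
    have hZ : (4*((i:ℕ)+1) : ℤ) = 2*k*(2*n+1) + 4*((j:ℕ)+1) := by exact_mod_cast hkey
    have hi := i.2; have hj := j.2
    rcases lt_trichotomy k 0 with h | h | h
    · exfalso
      have : k ≤ -1 := by omega
      have := mul_le_mul_of_nonneg_right this (show (0:ℤ) ≤ 2*n+1 by positivity)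
      nlinarith
    · subst h
      have : (4*((i:ℕ)+1) : ℤ) = 4*((j:ℕ)+1) := by linarith
      apply Fin.ext; omega
    · exfalso
      have : 1 ≤ k := h
      have := mul_le_mul_of_nonneg_right this (show (0:ℤ) ≤ 2*n+1 by positivity)
      nlinarith
  · -- 2A = 2kπ - 2B : then 2(i+1) + 2(j+1) = k(2n+1)
    have hpi := Real.pi_ne_zero
    have hkey : (4*((i:ℕ)+1) : ℝ) + 4*((j:ℕ)+1) = 2*k*(2*n+1) := by
      have h2 : ((4*((i:ℕ)+1) : ℝ) + 4*((j:ℕ)+1)) * π = (2*k*(2*n+1)) * π := by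
        rw [hA, hB] at hk
        field_simp at hk
        push_cast at hk ⊢
        linear_combination (2*π) * hk
      exact mul_right_cancel₀ hpi h2
    have hZ : (4*((i:ℕ)+1) : ℤ) + 4*((j:ℕ)+1) = 2*k*(2*n+1) := by exact_mod_cast hkey
    have hi := i.2; have hj := j.2
    exfalso
    rcases lt_trichotomy k 0 with h | h | h
    · have : k ≤ -1 := by omega
      have := mul_le_mul_of_nonneg_right this (show (0:ℤ) ≤ 2*n+1 by positivity)
      nlinarith
    · subst h
      have : (4*((i:ℕ)+1) : ℤ) + 4*((j:ℕ)+1) = 0 := by linarith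
      omega
    · have h1 : 1 ≤ k := h
      have h2 := mul_le_mul_of_nonneg_right h1 (show (0:ℤ) ≤ 2*n+1 by positivity)
      -- 2k(2n+1) ≥ 2(2n+1) = 4n+2, but LHS ≤ 4n + 4(n)... need upper bound
      -- 4(i+1)+4(j+1) ≤ 8n, and = 2k(2n+1) ≥ 4n+2. Not immediate contradiction; need parity
      have heven : (2:ℤ) ∣ k * (2*n+1) → True := fun _ => trivial
      -- from hZ : 4(i+1)+4(j+1) = 2k(2n+1) ⇒ 2(i+1)+2(j+1) = k(2n+1), even = k * odd ⇒ k even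
      have hZ' : 2*((i:ℤ)+1) + 2*((j:ℤ)+1) = k*(2*(n:ℤ)+1) := by linarith
      rcases Int.even_or_odd k with ⟨l, hl⟩ | ⟨l, hl⟩
      · subst hl
        have hZ'' : ((i:ℤ)+1) + ((j:ℤ)+1) = l*(2*(n:ℤ)+1) := by linarith
        have hi' : ((i:ℕ):ℤ) < n := by exact_mod_cast hi
        have hj' : ((j:ℕ):ℤ) < n := by exact_mod_cast hj
        have hlpos : 1 ≤ l := by
          by_contra hneg
          push_neg at hneg
          have hneg' : l ≤ 0 := by omega
          have := mul_le_mul_of_nonneg_right hneg' (show (0:ℤ) ≤ 2*(n:ℤ)+1 by positivity)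
          simp at this
          linarith
        have h3 : 1*(2*(n:ℤ)+1) ≤ l*(2*(n:ℤ)+1) :=
          mul_le_mul_of_nonneg_right hlpos (by positivity)
        linarith
      · subst hl
        obtain ⟨M, hM⟩ : ∃ M : ℤ, l*(2*(n:ℤ)+1) = M := ⟨_, rfl⟩
        have : 2*((i:ℤ)+1) + 2*((j:ℤ)+1) = 2*M + (2*(n:ℤ)+1) := by
          rw [← hM]; linarith [hZ']
        omega

theorem stmt_17 (n : ℕ) (hn : 0 < n) (v : ℕ → ℝ)
    (hv : ∀ k, v k = 2 * Real.cos (2 * k * π / (2 * n + 1))) :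
    ∏ j ∈ Finset.Icc 1 n, (X - C (v j ^ 2)) =
      ∑ ν ∈ Finset.range (n + 1),
        C ((-1 : ℝ) ^ ν * ((2 * n - ν).choose ν : ℝ)) * X ^ (n - ν) := by
  set p : ℝ[X] := ∏ j ∈ Finset.Icc 1 n, (X - C (v j ^ 2)) with hp
  set q : ℝ[X] := ∑ ν ∈ Finset.range (n + 1),
      C ((-1 : ℝ) ^ ν * ((2 * n - ν).choose ν : ℝ)) * X ^ (n - ν) with hq
  have hpm : p.Monic := monic_prod_of_monic _ _ (fun j _ => monic_X_sub_C _)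
  have hpdeg : p.natDegree = n := by
    rw [hp, natDegree_prod_of_monic _ _ (fun j _ => monic_X_sub_C _)]
    simp only [natDegree_X_sub_C]
    simp [Nat.card_Icc]
  -- q = r + X^n with degree r < n
  have hqdecomp : q = (∑ i ∈ Finset.range n,
      C ((-1 : ℝ) ^ (i+1) * ((2 * n - (i+1)).choose (i+1) : ℝ)) * X ^ (n - (i+1))) + X ^ n := by
    rw [hq, Finset.sum_range_succ' _ n]
    simp
  set r : ℝ[X] := ∑ i ∈ Finset.range n,
      C ((-1 : ℝ) ^ (i+1) * ((2 * n - (i+1)).choose (i+1) : ℝ)) * X ^ (n - (i+1)) with hr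
  have hrdeg : r.degree < (n : WithBot ℕ) := by
    apply lt_of_le_of_lt (degree_sum_le _ _)
    rw [Finset.sup_lt_iff (by exact_mod_cast (WithBot.bot_lt_coe n))]
    intro i hi
    simp only [Finset.mem_range] at hi
    apply lt_of_le_of_lt (degree_C_mul_X_pow_le _ _)
    exact_mod_cast Nat.cast_lt.mpr (by omega : n - (i+1) < n)
  have hpXn : (p - X ^ n).degree < (n : WithBot ℕ) := by
    have h1 : p.degree = (X ^ n : ℝ[X]).degree := by
      rw [degree_X_pow, degree_eq_natDegree hpm.ne_zero, hpdeg]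
    have := degree_sub_lt h1 hpm.ne_zero (by rw [hpm.leadingCoeff, (monic_X_pow n).leadingCoeff])
    rwa [degree_eq_natDegree hpm.ne_zero, hpdeg] at this
  have hdlt : (p - q).degree < (n : WithBot ℕ) := by
    have : p - q = (p - X ^ n) - r := by rw [hqdecomp]; ring
    rw [this]
    exact lt_of_le_of_lt (degree_sub_le _ _) (max_lt hpXn hrdeg)
  have hdzero : p - q = 0 := by
    by_cases hd : p - q = 0
    · exact hd
    apply eq_zero_of_natDegree_lt_card_of_eval_eq_zero (p - q) (vinj n hn v hv)
    · intro i
      have hmem : (i:ℕ)+1 ∈ Finset.Icc 1 n := by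
        simp only [Finset.mem_Icc]
        exact ⟨by omega, by omega⟩
      have hpe : p.eval (v ((i:ℕ)+1) ^ 2) = 0 := by
        rw [hp, eval_prod]
        apply Finset.prod_eq_zero hmem
        simp
      have hqe : q.eval (v ((i:ℕ)+1) ^ 2) = 0 :=
        qeval n hn v hv ((i:ℕ)+1) (by omega) (by omega)
      simp [eval_sub, hpe, hqe]
    · rw [Fintype.card_fin]
      exact (natDegree_lt_iff_degree_lt hd).mpr hdlt
  have := sub_eq_zero.mp hdzero
  exact this
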